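/- Let A be a Hopf algebra over ℂ with antipode S. For a linear functional f on A define the ℂ-linear operator 𝔅(f) on A⊗A⊗A⊗A by 𝔅(f)(x⊗y⊗z⊗v) = Σ f(x₍₂₎·S(y₍₁₎)·S(z₍₁₎)·v₍₂₎) · x₍₁₎⊗y₍₂₎⊗z₍₂₎⊗v₍₁₎. Then 𝔅(ε) = id and 𝔅(f∗f') = 𝔅(f)∘𝔅(f') for all linear functionals f, f', where ∗ is the convolution product; i.e. 𝔅 is an algebra-homomorphic representation of the convolution algebra A* on A^{⊗4}. (These are the local plaquette operators B^f of the Drinfeld double action on the Kitaev model.) -/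

import Mathlib

set_option maxHeartbeats 1000000


/-!
STATEMENT 15: Let `A` be a Hopf algebra over `ℂ` with antipode `S`.  For a linear functional
`f` on `A` define the `ℂ`-linear operator `𝔅 f` on `A ⊗ A ⊗ A ⊗ A` by
`𝔅 f (x ⊗ y ⊗ z ⊗ v) = Σ f (x₍₂₎ * S y₍₁₎ * S z₍₁₎ * v₍₂₎) • x₍₁₎ ⊗ y₍₂₎ ⊗ z₍₂₎ ⊗ v₍₁₎`.
Then `𝔅 ε = id` and `𝔅 (f ∗ f') = 𝔅 f ∘ 𝔅 f'` (with `∗` the convolution product); i.e.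
`𝔅` is an algebra-homomorphic representation of `A*` on `A^{⊗4}` (the local plaquette
operators of the Kitaev model).

Encoding: `comulEach` comultiplies each tensor factor, `preSwap` flips the first and the
fourth of the resulting pairs, `unzip` (built from `tensorTensorTensorComm`) regroups
`(a₁ ⊗ b₁) ⊗ (a₂ ⊗ b₂) ⊗ (a₃ ⊗ b₃) ⊗ (a₄ ⊗ b₄)` into
`(a₁ ⊗ a₂ ⊗ a₃ ⊗ a₄) ⊗ (b₁ ⊗ b₂ ⊗ b₃ ⊗ b₄)`, and the functional
`scalarPart f (a₁ ⊗ a₂ ⊗ a₃ ⊗ a₄) = f (a₁ * S a₂ * S a₃ * a₄)` is applied to the first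
group.  Altogether `plaquetteRep f` is exactly the operator `𝔅 f` above: the scalar slots
receive `(x₍₂₎, y₍₁₎, z₍₁₎, v₍₂₎)` and the output slots `(x₍₁₎, y₍₂₎, z₍₂₎, v₍₁₎)`.
-/

open TensorProduct

noncomputable section

/-- The convolution product on the dual:
`(f ∗ g) a = Σ_{(a)} f a₍₁₎ * g a₍₂₎`; the counit is its unit. -/
def conv {A : Type*} [Ring A] [HopfAlgebra ℂ A]
    (f g : Module.Dual ℂ A) : Module.Dual ℂ A :=
  LinearMap.mul' ℂ ℂ ∘ₗ TensorProduct.map f g ∘ₗ Coalgebra.comul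

variable (A : Type*) [Ring A] [HopfAlgebra ℂ A]

/-- Comultiply every factor of `A^{⊗4}`. -/
def comulEach : (A ⊗[ℂ] (A ⊗[ℂ] (A ⊗[ℂ] A))) →ₗ[ℂ]
    ((A ⊗[ℂ] A) ⊗[ℂ] ((A ⊗[ℂ] A) ⊗[ℂ] ((A ⊗[ℂ] A) ⊗[ℂ] (A ⊗[ℂ] A)))) :=
  TensorProduct.map Coalgebra.comul
    (TensorProduct.map Coalgebra.comul
      (TensorProduct.map Coalgebra.comul Coalgebra.comul))

/-- Flip the first and fourth pairs:
`(x₁ ⊗ x₂) ⊗ (y₁ ⊗ y₂) ⊗ (z₁ ⊗ z₂) ⊗ (v₁ ⊗ v₂) ↦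
 (x₂ ⊗ x₁) ⊗ (y₁ ⊗ y₂) ⊗ (z₁ ⊗ z₂) ⊗ (v₂ ⊗ v₁)`. -/
def preSwap : ((A ⊗[ℂ] A) ⊗[ℂ] ((A ⊗[ℂ] A) ⊗[ℂ] ((A ⊗[ℂ] A) ⊗[ℂ] (A ⊗[ℂ] A)))) →ₗ[ℂ]
    ((A ⊗[ℂ] A) ⊗[ℂ] ((A ⊗[ℂ] A) ⊗[ℂ] ((A ⊗[ℂ] A) ⊗[ℂ] (A ⊗[ℂ] A)))) :=
  TensorProduct.map (TensorProduct.comm ℂ A A).toLinearMap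
    (TensorProduct.map LinearMap.id
      (TensorProduct.map LinearMap.id (TensorProduct.comm ℂ A A).toLinearMap))

/-- Regroup `(a₁ ⊗ b₁) ⊗ (a₂ ⊗ b₂) ⊗ (a₃ ⊗ b₃) ⊗ (a₄ ⊗ b₄)` into
`(a₁ ⊗ a₂ ⊗ a₃ ⊗ a₄) ⊗ (b₁ ⊗ b₂ ⊗ b₃ ⊗ b₄)`. -/
def unzip : ((A ⊗[ℂ] A) ⊗[ℂ] ((A ⊗[ℂ] A) ⊗[ℂ] ((A ⊗[ℂ] A) ⊗[ℂ] (A ⊗[ℂ] A)))) ≃ₗ[ℂ]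
    ((A ⊗[ℂ] (A ⊗[ℂ] (A ⊗[ℂ] A))) ⊗[ℂ] (A ⊗[ℂ] (A ⊗[ℂ] (A ⊗[ℂ] A)))) :=
  (TensorProduct.congr (LinearEquiv.refl ℂ (A ⊗[ℂ] A))
      ((TensorProduct.congr (LinearEquiv.refl ℂ (A ⊗[ℂ] A))
          (TensorProduct.tensorTensorTensorComm ℂ A A A A)).trans
        (TensorProduct.tensorTensorTensorComm ℂ A A (A ⊗[ℂ] A) (A ⊗[ℂ] A)))).trans
    (TensorProduct.tensorTensorTensorComm ℂ A A (A ⊗[ℂ] (A ⊗[ℂ] A)) (A ⊗[ℂ] (A ⊗[ℂ] A)))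

/-- Multiply four factors: `a ⊗ b ⊗ c ⊗ d ↦ a * b * c * d`. -/
def mulFour : (A ⊗[ℂ] (A ⊗[ℂ] (A ⊗[ℂ] A))) →ₗ[ℂ] A :=
  LinearMap.mul' ℂ A ∘ₗ LinearMap.lTensor A (LinearMap.mul' ℂ A) ∘ₗ
    LinearMap.lTensor A (LinearMap.lTensor A (LinearMap.mul' ℂ A))

/-- The functional `a₁ ⊗ a₂ ⊗ a₃ ⊗ a₄ ↦ f (a₁ * S a₂ * S a₃ * a₄)`. -/
def scalarPart (f : Module.Dual ℂ A) : (A ⊗[ℂ] (A ⊗[ℂ] (A ⊗[ℂ] A))) →ₗ[ℂ] ℂ :=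
  f ∘ₗ mulFour A ∘ₗ
    TensorProduct.map LinearMap.id
      (TensorProduct.map (HopfAlgebra.antipode (R := ℂ) (A := A))
        (TensorProduct.map (HopfAlgebra.antipode (R := ℂ) (A := A)) LinearMap.id))

/-- The Kitaev plaquette operator
`𝔅 f (x ⊗ y ⊗ z ⊗ v) = Σ f (x₍₂₎ * S y₍₁₎ * S z₍₁₎ * v₍₂₎) • x₍₁₎ ⊗ y₍₂₎ ⊗ z₍₂₎ ⊗ v₍₁₎`. -/
def plaquetteRep (f : Module.Dual ℂ A) :
    Module.End ℂ (A ⊗[ℂ] (A ⊗[ℂ] (A ⊗[ℂ] A))) :=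
  (TensorProduct.lid ℂ (A ⊗[ℂ] (A ⊗[ℂ] (A ⊗[ℂ] A)))).toLinearMap ∘ₗ
    LinearMap.rTensor (A ⊗[ℂ] (A ⊗[ℂ] (A ⊗[ℂ] A))) (scalarPart A f) ∘ₗ
      (unzip A).toLinearMap ∘ₗ preSwap A ∘ₗ comulEach A

namespace KAux
variable {A : Type*} [Ring A] [HopfAlgebra ℂ A]
open Coalgebra HopfAlgebra Bialgebra

lemma sum_counit_smul_right {a : A} (r : Coalgebra.Repr ℂ a (A × A)) :
    ∑ i ∈ r.index, Coalgebra.counit (R := ℂ) (r.left i) • r.right i = a := by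
  have h := congrArg (TensorProduct.lid ℂ A) (Coalgebra.sum_counit_tmul_eq r)
  simp only [map_sum, TensorProduct.lid_tmul, one_smul] at h
  simpa using h

lemma sum_counit_smul_left {a : A} (r : Coalgebra.Repr ℂ a (A × A)) :
    ∑ i ∈ r.index, Coalgebra.counit (R := ℂ) (r.right i) • r.left i = a := by
  have h := congrArg (TensorProduct.rid ℂ A) (Coalgebra.sum_tmul_counit_eq r)
  simp only [map_sum, TensorProduct.rid_tmul, one_smul] at h
  simpa using h

lemma counit_antipode (a : A) :
    Coalgebra.counit (R := ℂ) (antipode (R := ℂ) a) = Coalgebra.counit (R := ℂ) a := by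
  set r := ℛ ℂ a with hr
  have h2 := congrArg (Coalgebra.counit (R := ℂ)) (HopfAlgebra.sum_antipode_mul_eq_algebraMap_counit (R := ℂ) r)
  rw [map_sum] at h2
  simp only [Bialgebra.counit_mul, Bialgebra.counit_algebraMap] at h2
  have hs : ∑ i ∈ r.index, Coalgebra.counit (R := ℂ) (r.right i) • r.left i = a := by
    have h := congrArg (TensorProduct.rid ℂ A) (Coalgebra.sum_tmul_counit_eq r)
    simp only [map_sum, TensorProduct.rid_tmul, one_smul] at h
    simpa using h
  calc Coalgebra.counit (R := ℂ) (antipode (R := ℂ) a)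
      = Coalgebra.counit (R := ℂ) (antipode (R := ℂ)
          (∑ i ∈ r.index, Coalgebra.counit (R := ℂ) (r.right i) • r.left i)) := by rw [hs]
    _ = ∑ i ∈ r.index, Coalgebra.counit (R := ℂ) (antipode (R := ℂ) (r.left i)) *
          Coalgebra.counit (R := ℂ) (r.right i) := by
        rw [map_sum, map_sum]
        refine Finset.sum_congr rfl fun i _ => ?_
        simp [smul_eq_mul, mul_comm]
    _ = Coalgebra.counit (R := ℂ) a := h2

section Conv
variable {B : Type*} [Semiring B] [Algebra ℂ B]

def cvMul (f g : A →ₗ[ℂ] B) : A →ₗ[ℂ] B :=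
  LinearMap.mul' ℂ B ∘ₗ TensorProduct.map f g ∘ₗ Coalgebra.comul

def cvOne : A →ₗ[ℂ] B := Algebra.linearMap ℂ B ∘ₗ Coalgebra.counit

lemma cvMul_apply (f g : A →ₗ[ℂ] B) {a : A} (r : Coalgebra.Repr ℂ a (A × A)) :
    cvMul f g a = ∑ i ∈ r.index, f (r.left i) * g (r.right i) := by
  simp only [cvMul, LinearMap.comp_apply, ← r.eq, map_sum, TensorProduct.map_tmul,
    LinearMap.mul'_apply]

lemma cvOne_apply (a : A) : cvOne (B := B) (A := A) a = algebraMap ℂ B (Coalgebra.counit (R := ℂ) a) := rfl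

lemma cvOne_mul (f : A →ₗ[ℂ] B) : cvMul cvOne f = f := by
  refine LinearMap.ext fun a => ?_
  set r := ℛ ℂ a with hr
  rw [cvMul_apply _ _ r]
  have hs : ∑ i ∈ r.index, Coalgebra.counit (R := ℂ) (r.left i) • r.right i = a := by
    have h := congrArg (TensorProduct.lid ℂ A) (Coalgebra.sum_counit_tmul_eq r)
    simp only [map_sum, TensorProduct.lid_tmul, one_smul] at h
    simpa using h
  calc ∑ i ∈ r.index, cvOne (r.left i) * f (r.right i)
      = ∑ i ∈ r.index, Coalgebra.counit (R := ℂ) (r.left i) • f (r.right i) := by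
        refine Finset.sum_congr rfl fun i _ => ?_
        rw [cvOne_apply, Algebra.smul_def]
    _ = f (∑ i ∈ r.index, Coalgebra.counit (R := ℂ) (r.left i) • r.right i) := by
        rw [map_sum]
        exact Finset.sum_congr rfl fun i _ => (map_smul f _ _).symm
    _ = f a := by rw [hs]

lemma cvMul_one (f : A →ₗ[ℂ] B) : cvMul f cvOne = f := by
  refine LinearMap.ext fun a => ?_
  set r := ℛ ℂ a with hr
  rw [cvMul_apply _ _ r]
  have hs : ∑ i ∈ r.index, Coalgebra.counit (R := ℂ) (r.right i) • r.left i = a := by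
    have h := congrArg (TensorProduct.rid ℂ A) (Coalgebra.sum_tmul_counit_eq r)
    simp only [map_sum, TensorProduct.rid_tmul, one_smul] at h
    simpa using h
  calc ∑ i ∈ r.index, f (r.left i) * cvOne (r.right i)
      = ∑ i ∈ r.index, Coalgebra.counit (R := ℂ) (r.right i) • f (r.left i) := by
        refine Finset.sum_congr rfl fun i _ => ?_
        rw [cvOne_apply, ← Algebra.commutes, ← Algebra.smul_def]
    _ = f (∑ i ∈ r.index, Coalgebra.counit (R := ℂ) (r.right i) • r.left i) := by
        rw [map_sum]
        exact Finset.sum_congr rfl fun i _ => (map_smul f _ _).symm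
    _ = f a := by rw [hs]

lemma cvMul_assoc (f g h : A →ₗ[ℂ] B) : cvMul (cvMul f g) h = cvMul f (cvMul g h) := by
  refine LinearMap.ext fun a => ?_
  set r := ℛ ℂ a with hr
  set rl := fun i => ℛ ℂ (r.left i) with hrl
  set rr := fun i => ℛ ℂ (r.right i) with hrr
  have key := congrArg (LinearMap.mul' ℂ B ∘ₗ
      TensorProduct.map f (LinearMap.mul' ℂ B ∘ₗ TensorProduct.map g h))
    (Coalgebra.sum_tmul_tmul_eq r rl rr)
  simp only [map_sum, LinearMap.comp_apply, TensorProduct.map_tmul,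
    LinearMap.mul'_apply] at key
  rw [cvMul_apply (cvMul f g) h r, cvMul_apply f (cvMul g h) r]
  calc ∑ i ∈ r.index, cvMul f g (r.left i) * h (r.right i)
      = ∑ i ∈ r.index, ∑ j ∈ (rl i).index,
          f ((rl i).left j) * (g ((rl i).right j) * h (r.right i)) := by
        refine Finset.sum_congr rfl fun i _ => ?_
        rw [cvMul_apply f g (rl i), Finset.sum_mul]
        exact Finset.sum_congr rfl fun j _ => mul_assoc _ _ _
    _ = ∑ i ∈ r.index, ∑ j ∈ (rr i).index,
          f (r.left i) * (g ((rr i).left j) * h ((rr i).right j)) := key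
    _ = ∑ i ∈ r.index, f (r.left i) * cvMul g h (r.right i) := by
        refine Finset.sum_congr rfl fun i _ => ?_
        rw [cvMul_apply g h (rr i), Finset.mul_sum]

lemma cv_inv_unique {f g h : A →ₗ[ℂ] B} (h1 : cvMul h f = cvOne) (h2 : cvMul f g = cvOne) :
    h = g := by
  have := cvMul_assoc h f g
  rw [h1, h2, cvOne_mul, cvMul_one] at this
  exact this.symm

end Conv

lemma cv_antipode_id :
    cvMul (A := A) (B := A) (HopfAlgebra.antipode (R := ℂ)) LinearMap.id = cvOne := by
  have : TensorProduct.map (HopfAlgebra.antipode (R := ℂ) (A := A)) LinearMap.id =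
      LinearMap.rTensor A (HopfAlgebra.antipode (R := ℂ)) := rfl
  rw [cvMul, this, cvOne]
  exact HopfAlgebra.mul_antipode_rTensor_comul

lemma cv_id_antipode :
    cvMul (A := A) (B := A) LinearMap.id (HopfAlgebra.antipode (R := ℂ)) = cvOne := by
  have : TensorProduct.map (LinearMap.id (M := A)) (HopfAlgebra.antipode (R := ℂ) (A := A)) =
      LinearMap.lTensor A (HopfAlgebra.antipode (R := ℂ)) := rfl
  rw [cvMul, this, cvOne]
  exact HopfAlgebra.mul_antipode_lTensor_comul


def antiComul : A →ₗ[ℂ] A ⊗[ℂ] A :=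
  (TensorProduct.comm ℂ A A).toLinearMap ∘ₗ
    TensorProduct.map (HopfAlgebra.antipode (R := ℂ)) (HopfAlgebra.antipode (R := ℂ)) ∘ₗ
      Coalgebra.comul

lemma cv_comulS_comul :
    cvMul (A := A) (B := A ⊗[ℂ] A)
      (Coalgebra.comul ∘ₗ HopfAlgebra.antipode (R := ℂ)) Coalgebra.comul = cvOne := by
  refine LinearMap.ext fun a => ?_
  set r := ℛ ℂ a with hr
  rw [cvMul_apply _ _ r, cvOne_apply]
  calc ∑ i ∈ r.index,
      (Coalgebra.comul ∘ₗ HopfAlgebra.antipode (R := ℂ)) (r.left i) * Coalgebra.comul (r.right i)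
      = ∑ i ∈ r.index,
        Coalgebra.comul (R := ℂ) (HopfAlgebra.antipode (R := ℂ) (r.left i) * r.right i) := by
        exact Finset.sum_congr rfl fun i _ => (Bialgebra.comul_mul _ _).symm
    _ = Coalgebra.comul (R := ℂ)
        (∑ i ∈ r.index, HopfAlgebra.antipode (R := ℂ) (r.left i) * r.right i) := by
        rw [map_sum]
    _ = algebraMap ℂ (A ⊗[ℂ] A) (Coalgebra.counit (R := ℂ) a) := by
        rw [HopfAlgebra.sum_antipode_mul_eq_algebraMap_counit (R := ℂ) r, Bialgebra.comul_algebraMap]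


def Lmap1 : A ⊗[ℂ] (A ⊗[ℂ] A) →ₗ[ℂ] A ⊗[ℂ] A :=
  LinearMap.mul' ℂ (A ⊗[ℂ] A) ∘ₗ LinearMap.lTensor (A ⊗[ℂ] A) antiComul ∘ₗ
    (TensorProduct.assoc ℂ A A A).symm.toLinearMap

lemma Lmap1_tmul (x y z : A) :
    Lmap1 (x ⊗ₜ[ℂ] (y ⊗ₜ[ℂ] z)) = (x ⊗ₜ[ℂ] y) * antiComul z := by
  simp [Lmap1]

def L2map (c : A) : A ⊗[ℂ] (A ⊗[ℂ] A) →ₗ[ℂ] A ⊗[ℂ] A :=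
  TensorProduct.map (LinearMap.mulLeft ℂ c ∘ₗ HopfAlgebra.antipode (R := ℂ))
      (LinearMap.mul' ℂ A ∘ₗ LinearMap.lTensor A (HopfAlgebra.antipode (R := ℂ))) ∘ₗ
    (TensorProduct.assoc ℂ A A A).toLinearMap ∘ₗ
    (TensorProduct.comm ℂ A (A ⊗[ℂ] A)).toLinearMap ∘ₗ
    (TensorProduct.assoc ℂ A A A).toLinearMap ∘ₗ
    (TensorProduct.comm ℂ A (A ⊗[ℂ] A)).toLinearMap

lemma L2map_tmul (c x y z : A) :
    L2map c (x ⊗ₜ[ℂ] (y ⊗ₜ[ℂ] z)) =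
      (c * HopfAlgebra.antipode (R := ℂ) z) ⊗ₜ[ℂ] (x * HopfAlgebra.antipode (R := ℂ) y) := by
  simp [L2map, TensorProduct.comm_tmul, TensorProduct.assoc_tmul,
    TensorProduct.map_tmul, LinearMap.mul'_apply, LinearMap.mulLeft_apply]

def M1map (c : A) : A →ₗ[ℂ] A ⊗[ℂ] A :=
  ((TensorProduct.mk ℂ A A).flip 1) ∘ₗ LinearMap.mulLeft ℂ c ∘ₗ HopfAlgebra.antipode (R := ℂ)

lemma M1map_apply (c t : A) :
    M1map c t = (c * HopfAlgebra.antipode (R := ℂ) t) ⊗ₜ[ℂ] (1 : A) := rfl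

lemma cv_comul_antiComul :
    cvMul (A := A) (B := A ⊗[ℂ] A) Coalgebra.comul antiComul = cvOne := by
  refine LinearMap.ext fun a => ?_
  set S' : A →ₗ[ℂ] A := HopfAlgebra.antipode (R := ℂ) with hS'
  set r := ℛ ℂ a with hr
  set rl := fun i => ℛ ℂ (r.left i) with hrl
  set rr := fun i => ℛ ℂ (r.right i) with hrr
  have key1 := congrArg (Lmap1 (A := A)) (Coalgebra.sum_tmul_tmul_eq r rl rr)
  simp only [map_sum, Lmap1_tmul] at key1
  rw [cvMul_apply _ _ r]
  calc ∑ i ∈ r.index, Coalgebra.comul (r.left i) * antiComul (r.right i)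
      = ∑ i ∈ r.index, ∑ j ∈ (rl i).index,
          ((rl i).left j ⊗ₜ[ℂ] (rl i).right j) * antiComul (r.right i) := by
        refine Finset.sum_congr rfl fun i _ => ?_
        rw [← (rl i).eq, Finset.sum_mul]
    _ = ∑ i ∈ r.index, ∑ j ∈ (rr i).index,
          (r.left i ⊗ₜ[ℂ] (rr i).left j) * antiComul ((rr i).right j) := key1
    _ = ∑ i ∈ r.index, (r.left i * S' (r.right i)) ⊗ₜ[ℂ] (1 : A) := by
        refine Finset.sum_congr rfl fun i _ => ?_
        set rrl := fun j => ℛ ℂ ((rr i).left j) with hrrl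
        set rrr := fun j => ℛ ℂ ((rr i).right j) with hrrr
        have key2 := congrArg (L2map (r.left i)) (Coalgebra.sum_tmul_tmul_eq (rr i) rrl rrr)
        simp only [map_sum, L2map_tmul] at key2
        calc ∑ j ∈ (rr i).index, (r.left i ⊗ₜ[ℂ] (rr i).left j) * antiComul ((rr i).right j)
            = ∑ j ∈ (rr i).index, ∑ k ∈ (rrr j).index,
                (r.left i * S' ((rrr j).right k)) ⊗ₜ[ℂ] ((rr i).left j * S' ((rrr j).left k)) := by
              refine Finset.sum_congr rfl fun j _ => ?_
              rw [antiComul, LinearMap.comp_apply, LinearMap.comp_apply, ← (rrr j).eq]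
              rw [map_sum, map_sum, Finset.mul_sum]
              refine Finset.sum_congr rfl fun k _ => ?_
              simp only [TensorProduct.map_tmul, LinearEquiv.coe_coe, TensorProduct.comm_tmul]
              rw [Algebra.TensorProduct.tmul_mul_tmul]
          _ = ∑ j ∈ (rr i).index, ∑ k ∈ (rrl j).index,
                (r.left i * S' ((rr i).right j)) ⊗ₜ[ℂ] ((rrl j).left k * S' ((rrl j).right k)) :=
              key2.symm
          _ = ∑ j ∈ (rr i).index, Coalgebra.counit (R := ℂ) ((rr i).left j) •
                ((r.left i * S' ((rr i).right j)) ⊗ₜ[ℂ] (1 : A)) := by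
              refine Finset.sum_congr rfl fun j _ => ?_
              rw [← TensorProduct.tmul_sum, HopfAlgebra.sum_mul_antipode_eq_smul (R := ℂ) (rrl j),
                TensorProduct.tmul_smul]
          _ = (r.left i * S' (r.right i)) ⊗ₜ[ℂ] (1 : A) := by
              have := congrArg (M1map (r.left i)) (sum_counit_smul_right (rr i))
              simpa only [map_sum, map_smul, M1map_apply] using this
    _ = cvOne a := by
        rw [← TensorProduct.sum_tmul, HopfAlgebra.sum_mul_antipode_eq_algebraMap_counit (R := ℂ) r, cvOne_apply,
          Algebra.TensorProduct.algebraMap_apply]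

lemma comul_comp_antipode :
    Coalgebra.comul ∘ₗ HopfAlgebra.antipode (R := ℂ) = antiComul (A := A) :=
  cv_inv_unique cv_comulS_comul cv_comul_antiComul

lemma comul_antipode_repr {b : A} (rb : Coalgebra.Repr ℂ b (A × A)) :
    Coalgebra.comul (R := ℂ) (HopfAlgebra.antipode (R := ℂ) b) =
      ∑ j ∈ rb.index, HopfAlgebra.antipode (R := ℂ) (rb.right j) ⊗ₜ[ℂ]
        HopfAlgebra.antipode (R := ℂ) (rb.left j) := by
  have := LinearMap.congr_fun (comul_comp_antipode (A := A)) b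
  rw [LinearMap.comp_apply] at this
  rw [this, antiComul, LinearMap.comp_apply, LinearMap.comp_apply, ← rb.eq]
  simp only [map_sum, TensorProduct.map_tmul, LinearEquiv.coe_coe, TensorProduct.comm_tmul]

end KAux
section Main
variable {A : Type*} [Ring A] [HopfAlgebra ℂ A]
open Coalgebra HopfAlgebra Bialgebra KAux

local notation "S''" => HopfAlgebra.antipode (R := ℂ) (A := A)

lemma sum4_rev {M : Type*} [AddCommMonoid M] {ι₁ ι₂ ι₃ ι₄ : Type*}
    (sa : Finset ι₁) (sb : Finset ι₂) (sc : Finset ι₃) (sd : Finset ι₄)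
    (F : ι₁ → ι₂ → ι₃ → ι₄ → M) :
    (∑ l ∈ sd, ∑ k ∈ sc, ∑ j ∈ sb, ∑ i ∈ sa, F i j k l) =
      ∑ i ∈ sa, ∑ j ∈ sb, ∑ k ∈ sc, ∑ l ∈ sd, F i j k l := by
  calc (∑ l ∈ sd, ∑ k ∈ sc, ∑ j ∈ sb, ∑ i ∈ sa, F i j k l)
      = ∑ l ∈ sd, ∑ k ∈ sc, ∑ i ∈ sa, ∑ j ∈ sb, F i j k l :=
        Finset.sum_congr rfl fun _ _ => Finset.sum_congr rfl fun _ _ => Finset.sum_comm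
    _ = ∑ l ∈ sd, ∑ i ∈ sa, ∑ k ∈ sc, ∑ j ∈ sb, F i j k l :=
        Finset.sum_congr rfl fun _ _ => Finset.sum_comm
    _ = ∑ i ∈ sa, ∑ l ∈ sd, ∑ k ∈ sc, ∑ j ∈ sb, F i j k l := Finset.sum_comm
    _ = ∑ i ∈ sa, ∑ l ∈ sd, ∑ j ∈ sb, ∑ k ∈ sc, F i j k l :=
        Finset.sum_congr rfl fun _ _ => Finset.sum_congr rfl fun _ _ => Finset.sum_comm
    _ = ∑ i ∈ sa, ∑ j ∈ sb, ∑ l ∈ sd, ∑ k ∈ sc, F i j k l :=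
        Finset.sum_congr rfl fun _ _ => Finset.sum_comm
    _ = ∑ i ∈ sa, ∑ j ∈ sb, ∑ k ∈ sc, ∑ l ∈ sd, F i j k l :=
        Finset.sum_congr rfl fun _ _ => Finset.sum_congr rfl fun _ _ => Finset.sum_comm

lemma plaq_apply (f : Module.Dual ℂ A) {x y z v : A}
    (rx : Coalgebra.Repr ℂ x (A × A)) (ry : Coalgebra.Repr ℂ y (A × A))
    (rz : Coalgebra.Repr ℂ z (A × A)) (rv : Coalgebra.Repr ℂ v (A × A)) :
    plaquetteRep A f (x ⊗ₜ[ℂ] (y ⊗ₜ[ℂ] (z ⊗ₜ[ℂ] v))) =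
      ∑ i ∈ rx.index, ∑ j ∈ ry.index, ∑ k ∈ rz.index, ∑ l ∈ rv.index,
        f (rx.right i * (S'' (ry.left j) * (S'' (rz.left k) * rv.right l))) •
          (rx.left i ⊗ₜ[ℂ] (ry.right j ⊗ₜ[ℂ] (rz.right k ⊗ₜ[ℂ] rv.left l))) := by
  simp only [plaquetteRep, comulEach, LinearMap.comp_apply, TensorProduct.map_tmul]
  rw [← rx.eq, ← ry.eq, ← rz.eq, ← rv.eq]
  simp only [TensorProduct.sum_tmul, TensorProduct.tmul_sum, map_sum]
  rw [sum4_rev]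
  refine Finset.sum_congr rfl fun i _ => ?_
  refine Finset.sum_congr rfl fun j _ => ?_
  refine Finset.sum_congr rfl fun k _ => ?_
  refine Finset.sum_congr rfl fun l _ => ?_
  simp [preSwap, unzip, scalarPart, mulFour, TensorProduct.comm_tmul,
    TensorProduct.tensorTensorTensorComm_tmul, TensorProduct.congr_tmul,
    TensorProduct.lid_tmul, LinearMap.rTensor_tmul, LinearMap.lTensor_tmul,
    LinearMap.mul'_apply, TensorProduct.map_tmul]

lemma part1 : plaquetteRep A (Coalgebra.counit (R := ℂ)) = LinearMap.id := by
  ext x y z v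
  simp only [AlgebraTensorModule.curry_apply, TensorProduct.curry_apply,
    LinearMap.coe_restrictScalars, LinearMap.id_coe, id_eq]
  rw [plaq_apply (Coalgebra.counit (R := ℂ)) (ℛ ℂ x) (ℛ ℂ y) (ℛ ℂ z) (ℛ ℂ v)]
  conv_rhs => rw [← sum_counit_smul_left (ℛ ℂ x), ← sum_counit_smul_right (ℛ ℂ y),
    ← sum_counit_smul_right (ℛ ℂ z), ← sum_counit_smul_left (ℛ ℂ v)]
  simp only [TensorProduct.sum_tmul, TensorProduct.tmul_sum, ← TensorProduct.smul_tmul',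
    TensorProduct.tmul_smul, Finset.smul_sum, smul_smul]
  rw [sum4_rev]
  refine Finset.sum_congr rfl fun i _ => ?_
  refine Finset.sum_congr rfl fun j _ => ?_
  refine Finset.sum_congr rfl fun k _ => ?_
  refine Finset.sum_congr rfl fun l _ => ?_
  simp only [Bialgebra.counit_mul, KAux.counit_antipode, smul_smul]
  congr 1
  ring

def rot : (A ⊗[ℂ] (A ⊗[ℂ] A)) →ₗ[ℂ] (A ⊗[ℂ] (A ⊗[ℂ] A)) :=
  (TensorProduct.assoc ℂ A A A).toLinearMap ∘ₗ (TensorProduct.comm ℂ A (A ⊗[ℂ] A)).toLinearMap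

lemma rot_tmul (p q t : A) : rot (p ⊗ₜ[ℂ] (q ⊗ₜ[ℂ] t)) = q ⊗ₜ[ℂ] (t ⊗ₜ[ℂ] p) := by
  simp [rot]

def swp : (A ⊗[ℂ] (A ⊗[ℂ] A)) →ₗ[ℂ] (A ⊗[ℂ] (A ⊗[ℂ] A)) :=
  TensorProduct.map (HopfAlgebra.antipode (R := ℂ))
      (TensorProduct.map (HopfAlgebra.antipode (R := ℂ)) LinearMap.id) ∘ₗ
    (TensorProduct.assoc ℂ A A A).toLinearMap ∘ₗ
    (LinearMap.rTensor A (TensorProduct.comm ℂ A A).toLinearMap) ∘ₗ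
    (TensorProduct.assoc ℂ A A A).symm.toLinearMap

lemma swp_tmul (p q t : A) :
    swp (p ⊗ₜ[ℂ] (q ⊗ₜ[ℂ] t)) =
      HopfAlgebra.antipode (R := ℂ) q ⊗ₜ[ℂ] (HopfAlgebra.antipode (R := ℂ) p ⊗ₜ[ℂ] t) := by
  simp [swp]

def unzipG (M N : Type*) [AddCommMonoid M] [Module ℂ M] [AddCommMonoid N] [Module ℂ N] :
    ((M ⊗[ℂ] N) ⊗[ℂ] ((M ⊗[ℂ] N) ⊗[ℂ] ((M ⊗[ℂ] N) ⊗[ℂ] (M ⊗[ℂ] N)))) ≃ₗ[ℂ]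
      ((M ⊗[ℂ] (M ⊗[ℂ] (M ⊗[ℂ] M))) ⊗[ℂ] (N ⊗[ℂ] (N ⊗[ℂ] (N ⊗[ℂ] N)))) :=
  (TensorProduct.congr (LinearEquiv.refl ℂ (M ⊗[ℂ] N))
      ((TensorProduct.congr (LinearEquiv.refl ℂ (M ⊗[ℂ] N))
          (TensorProduct.tensorTensorTensorComm ℂ M N M N)).trans
        (TensorProduct.tensorTensorTensorComm ℂ M N (M ⊗[ℂ] M) (N ⊗[ℂ] N)))).trans
    (TensorProduct.tensorTensorTensorComm ℂ M N (M ⊗[ℂ] (M ⊗[ℂ] M)) (N ⊗[ℂ] (N ⊗[ℂ] N)))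

lemma unzipG_tmul {M N : Type*} [AddCommMonoid M] [Module ℂ M] [AddCommMonoid N] [Module ℂ N]
    (m₁ m₂ m₃ m₄ : M) (n₁ n₂ n₃ n₄ : N) :
    unzipG M N ((m₁ ⊗ₜ[ℂ] n₁) ⊗ₜ[ℂ] ((m₂ ⊗ₜ[ℂ] n₂) ⊗ₜ[ℂ] ((m₃ ⊗ₜ[ℂ] n₃) ⊗ₜ[ℂ] (m₄ ⊗ₜ[ℂ] n₄)))) =
      (m₁ ⊗ₜ[ℂ] (m₂ ⊗ₜ[ℂ] (m₃ ⊗ₜ[ℂ] m₄))) ⊗ₜ[ℂ] (n₁ ⊗ₜ[ℂ] (n₂ ⊗ₜ[ℂ] (n₃ ⊗ₜ[ℂ] n₄))) := by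
  simp [unzipG, TensorProduct.tensorTensorTensorComm_tmul, TensorProduct.congr_tmul]

def bigL (f f' : Module.Dual ℂ A) :
    ((A ⊗[ℂ] (A ⊗[ℂ] A)) ⊗[ℂ] ((A ⊗[ℂ] (A ⊗[ℂ] A)) ⊗[ℂ] ((A ⊗[ℂ] (A ⊗[ℂ] A)) ⊗[ℂ]
      (A ⊗[ℂ] (A ⊗[ℂ] A))))) →ₗ[ℂ] (A ⊗[ℂ] (A ⊗[ℂ] (A ⊗[ℂ] A))) :=
  ((TensorProduct.lid ℂ (A ⊗[ℂ] (A ⊗[ℂ] (A ⊗[ℂ] A)))).toLinearMap ∘ₗ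
      LinearMap.rTensor (A ⊗[ℂ] (A ⊗[ℂ] (A ⊗[ℂ] A))) (f ∘ₗ mulFour A)) ∘ₗ
    LinearMap.lTensor (A ⊗[ℂ] (A ⊗[ℂ] (A ⊗[ℂ] A)))
      ((TensorProduct.lid ℂ (A ⊗[ℂ] (A ⊗[ℂ] (A ⊗[ℂ] A)))).toLinearMap ∘ₗ
        LinearMap.rTensor (A ⊗[ℂ] (A ⊗[ℂ] (A ⊗[ℂ] A))) (f' ∘ₗ mulFour A)) ∘ₗ
    LinearMap.lTensor (A ⊗[ℂ] (A ⊗[ℂ] (A ⊗[ℂ] A))) (unzipG A A).toLinearMap ∘ₗ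
    (unzipG A (A ⊗[ℂ] A)).toLinearMap ∘ₗ
    TensorProduct.map rot (TensorProduct.map swp (TensorProduct.map swp rot))

lemma bigL_tmul (f f' : Module.Dual ℂ A) (p₁ q₁ t₁ p₂ q₂ t₂ p₃ q₃ t₃ p₄ q₄ t₄ : A) :
    bigL f f' ((p₁ ⊗ₜ[ℂ] (q₁ ⊗ₜ[ℂ] t₁)) ⊗ₜ[ℂ] ((p₂ ⊗ₜ[ℂ] (q₂ ⊗ₜ[ℂ] t₂)) ⊗ₜ[ℂ]
        ((p₃ ⊗ₜ[ℂ] (q₃ ⊗ₜ[ℂ] t₃)) ⊗ₜ[ℂ] (p₄ ⊗ₜ[ℂ] (q₄ ⊗ₜ[ℂ] t₄))))) =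
      (f (q₁ * (HopfAlgebra.antipode (R := ℂ) q₂ * (HopfAlgebra.antipode (R := ℂ) q₃ * q₄))) *
        f' (t₁ * (HopfAlgebra.antipode (R := ℂ) p₂ * (HopfAlgebra.antipode (R := ℂ) p₃ * t₄)))) •
        (p₁ ⊗ₜ[ℂ] (t₂ ⊗ₜ[ℂ] (t₃ ⊗ₜ[ℂ] p₄))) := by
  simp [bigL, rot_tmul, swp_tmul, unzipG_tmul, mulFour, TensorProduct.map_tmul,
    LinearMap.rTensor_tmul, LinearMap.lTensor_tmul, TensorProduct.lid_tmul,
    LinearMap.mul'_apply, smul_smul, mul_comm]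

lemma map_sum4 {M₁ M₂ M₃ M₄ W : Type*} [AddCommMonoid M₁] [Module ℂ M₁]
    [AddCommMonoid M₂] [Module ℂ M₂] [AddCommMonoid M₃] [Module ℂ M₃]
    [AddCommMonoid M₄] [Module ℂ M₄] [AddCommMonoid W] [Module ℂ W]
    (L : (M₁ ⊗[ℂ] (M₂ ⊗[ℂ] (M₃ ⊗[ℂ] M₄))) →ₗ[ℂ] W)
    {ι₁ ι₂ ι₃ ι₄ : Type*} (sa : Finset ι₁) (sb : Finset ι₂) (sc : Finset ι₃) (sd : Finset ι₄)
    (gx : ι₁ → M₁) (gy : ι₂ → M₂) (gz : ι₃ → M₃) (gv : ι₄ → M₄) :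
    L ((∑ i ∈ sa, gx i) ⊗ₜ[ℂ] ((∑ j ∈ sb, gy j) ⊗ₜ[ℂ] ((∑ k ∈ sc, gz k) ⊗ₜ[ℂ] (∑ l ∈ sd, gv l)))) =
      ∑ i ∈ sa, ∑ j ∈ sb, ∑ k ∈ sc, ∑ l ∈ sd, L (gx i ⊗ₜ[ℂ] (gy j ⊗ₜ[ℂ] (gz k ⊗ₜ[ℂ] gv l))) := by
  simp only [TensorProduct.sum_tmul, TensorProduct.tmul_sum, map_sum]
  rw [sum4_rev]

lemma part2 (f f' : Module.Dual ℂ A) :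
    plaquetteRep A (conv f f') = plaquetteRep A f ∘ₗ plaquetteRep A f' := by
  ext x y z v
  simp only [AlgebraTensorModule.curry_apply, TensorProduct.curry_apply,
    LinearMap.coe_restrictScalars, LinearMap.comp_apply]
  set rx := ℛ ℂ x with hrx
  set ry := ℛ ℂ y with hry
  set rz := ℛ ℂ z with hrz
  set rv := ℛ ℂ v with hrv
  set rxl := fun i => ℛ ℂ (rx.left i) with hrxl
  set rxr := fun i => ℛ ℂ (rx.right i) with hrxr
  set ryl := fun j => ℛ ℂ (ry.left j) with hryl
  set ryr := fun j => ℛ ℂ (ry.right j) with hryr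
  set rzl := fun k => ℛ ℂ (rz.left k) with hrzl
  set rzr := fun k => ℛ ℂ (rz.right k) with hrzr
  set rvl := fun l => ℛ ℂ (rv.left l) with hrvl
  set rvr := fun l => ℛ ℂ (rv.right l) with hrvr
  have hw : ∀ i j k l, conv f f'
      (rx.right i * (S'' (ry.left j) * (S'' (rz.left k) * rv.right l))) =
      ∑ i' ∈ (rxr i).index, ∑ j' ∈ (ryl j).index, ∑ k' ∈ (rzl k).index, ∑ l' ∈ (rvr l).index,
        f ((rxr i).left i' *
            (S'' ((ryl j).right j') * (S'' ((rzl k).right k') * (rvr l).left l'))) *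
        f' ((rxr i).right i' *
            (S'' ((ryl j).left j') * (S'' ((rzl k).left k') * (rvr l).right l'))) := by
    intro i j k l
    rw [conv, LinearMap.comp_apply, LinearMap.comp_apply]
    simp only [Bialgebra.comul_mul]
    rw [comul_antipode_repr (ryl j), comul_antipode_repr (rzl k), ← (rxr i).eq, ← (rvr l).eq]
    simp only [Finset.sum_mul, Finset.mul_sum, Algebra.TensorProduct.tmul_mul_tmul,
      map_sum, TensorProduct.map_tmul, LinearMap.mul'_apply]
    rw [sum4_rev]
  calc plaquetteRep A (conv f f') (x ⊗ₜ[ℂ] (y ⊗ₜ[ℂ] (z ⊗ₜ[ℂ] v)))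
      = ∑ i ∈ rx.index, ∑ j ∈ ry.index, ∑ k ∈ rz.index, ∑ l ∈ rv.index,
          conv f f' (rx.right i * (S'' (ry.left j) * (S'' (rz.left k) * rv.right l))) •
            (rx.left i ⊗ₜ[ℂ] (ry.right j ⊗ₜ[ℂ] (rz.right k ⊗ₜ[ℂ] rv.left l))) :=
        plaq_apply (conv f f') rx ry rz rv
    _ = ∑ i ∈ rx.index, ∑ j ∈ ry.index, ∑ k ∈ rz.index, ∑ l ∈ rv.index,
          ∑ i' ∈ (rxr i).index, ∑ j' ∈ (ryl j).index, ∑ k' ∈ (rzl k).index, ∑ l' ∈ (rvr l).index,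
            (f ((rxr i).left i' *
                (S'' ((ryl j).right j') * (S'' ((rzl k).right k') * (rvr l).left l'))) *
             f' ((rxr i).right i' *
                (S'' ((ryl j).left j') * (S'' ((rzl k).left k') * (rvr l).right l')))) •
            (rx.left i ⊗ₜ[ℂ] (ry.right j ⊗ₜ[ℂ] (rz.right k ⊗ₜ[ℂ] rv.left l))) := by
        refine Finset.sum_congr rfl fun i _ => Finset.sum_congr rfl fun j _ =>
          Finset.sum_congr rfl fun k _ => Finset.sum_congr rfl fun l _ => ?_
        rw [hw i j k l]
        simp only [Finset.sum_smul]
    _ = ∑ i ∈ rx.index, ∑ j ∈ ry.index, ∑ k ∈ rz.index, ∑ l ∈ rv.index,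
          bigL f f'
            ((∑ i' ∈ (rxr i).index,
                rx.left i ⊗ₜ[ℂ] ((rxr i).left i' ⊗ₜ[ℂ] (rxr i).right i')) ⊗ₜ[ℂ]
             ((∑ j' ∈ (ryl j).index,
                (ryl j).left j' ⊗ₜ[ℂ] ((ryl j).right j' ⊗ₜ[ℂ] ry.right j)) ⊗ₜ[ℂ]
              ((∑ k' ∈ (rzl k).index,
                (rzl k).left k' ⊗ₜ[ℂ] ((rzl k).right k' ⊗ₜ[ℂ] rz.right k)) ⊗ₜ[ℂ]
               (∑ l' ∈ (rvr l).index,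
                rv.left l ⊗ₜ[ℂ] ((rvr l).left l' ⊗ₜ[ℂ] (rvr l).right l'))))) := by
        refine Finset.sum_congr rfl fun i _ => Finset.sum_congr rfl fun j _ =>
          Finset.sum_congr rfl fun k _ => Finset.sum_congr rfl fun l _ => ?_
        rw [map_sum4]
        refine Finset.sum_congr rfl fun i' _ => Finset.sum_congr rfl fun j' _ =>
          Finset.sum_congr rfl fun k' _ => Finset.sum_congr rfl fun l' _ => ?_
        rw [bigL_tmul]
    _ = bigL f f'
          ((∑ i ∈ rx.index, ∑ i' ∈ (rxr i).index,
              rx.left i ⊗ₜ[ℂ] ((rxr i).left i' ⊗ₜ[ℂ] (rxr i).right i')) ⊗ₜ[ℂ]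
           ((∑ j ∈ ry.index, ∑ j' ∈ (ryl j).index,
              (ryl j).left j' ⊗ₜ[ℂ] ((ryl j).right j' ⊗ₜ[ℂ] ry.right j)) ⊗ₜ[ℂ]
            ((∑ k ∈ rz.index, ∑ k' ∈ (rzl k).index,
              (rzl k).left k' ⊗ₜ[ℂ] ((rzl k).right k' ⊗ₜ[ℂ] rz.right k)) ⊗ₜ[ℂ]
             (∑ l ∈ rv.index, ∑ l' ∈ (rvr l).index,
              rv.left l ⊗ₜ[ℂ] ((rvr l).left l' ⊗ₜ[ℂ] (rvr l).right l'))))) :=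
        (map_sum4 (bigL f f') rx.index ry.index rz.index rv.index _ _ _ _).symm
    _ = bigL f f'
          ((∑ i ∈ rx.index, ∑ i' ∈ (rxl i).index,
              (rxl i).left i' ⊗ₜ[ℂ] ((rxl i).right i' ⊗ₜ[ℂ] rx.right i)) ⊗ₜ[ℂ]
           ((∑ j ∈ ry.index, ∑ j' ∈ (ryr j).index,
              ry.left j ⊗ₜ[ℂ] ((ryr j).left j' ⊗ₜ[ℂ] (ryr j).right j')) ⊗ₜ[ℂ]
            ((∑ k ∈ rz.index, ∑ k' ∈ (rzr k).index,
              rz.left k ⊗ₜ[ℂ] ((rzr k).left k' ⊗ₜ[ℂ] (rzr k).right k')) ⊗ₜ[ℂ]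
             (∑ l ∈ rv.index, ∑ l' ∈ (rvl l).index,
              (rvl l).left l' ⊗ₜ[ℂ] ((rvl l).right l' ⊗ₜ[ℂ] rv.right l))))) := by
        rw [Coalgebra.sum_tmul_tmul_eq rx rxl rxr, Coalgebra.sum_tmul_tmul_eq ry ryl ryr,
          Coalgebra.sum_tmul_tmul_eq rz rzl rzr, Coalgebra.sum_tmul_tmul_eq rv rvl rvr]
    _ = ∑ i ∈ rx.index, ∑ j ∈ ry.index, ∑ k ∈ rz.index, ∑ l ∈ rv.index,
          bigL f f'
            ((∑ i' ∈ (rxl i).index,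
                (rxl i).left i' ⊗ₜ[ℂ] ((rxl i).right i' ⊗ₜ[ℂ] rx.right i)) ⊗ₜ[ℂ]
             ((∑ j' ∈ (ryr j).index,
                ry.left j ⊗ₜ[ℂ] ((ryr j).left j' ⊗ₜ[ℂ] (ryr j).right j')) ⊗ₜ[ℂ]
              ((∑ k' ∈ (rzr k).index,
                rz.left k ⊗ₜ[ℂ] ((rzr k).left k' ⊗ₜ[ℂ] (rzr k).right k')) ⊗ₜ[ℂ]
               (∑ l' ∈ (rvl l).index,
                (rvl l).left l' ⊗ₜ[ℂ] ((rvl l).right l' ⊗ₜ[ℂ] rv.right l))))) :=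
        map_sum4 (bigL f f') rx.index ry.index rz.index rv.index _ _ _ _
    _ = ∑ i ∈ rx.index, ∑ j ∈ ry.index, ∑ k ∈ rz.index, ∑ l ∈ rv.index,
          f' (rx.right i * (S'' (ry.left j) * (S'' (rz.left k) * rv.right l))) •
          ∑ i' ∈ (rxl i).index, ∑ j' ∈ (ryr j).index, ∑ k' ∈ (rzr k).index, ∑ l' ∈ (rvl l).index,
            f ((rxl i).right i' *
                (S'' ((ryr j).left j') * (S'' ((rzr k).left k') * (rvl l).right l'))) •
              ((rxl i).left i' ⊗ₜ[ℂ]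
                ((ryr j).right j' ⊗ₜ[ℂ] ((rzr k).right k' ⊗ₜ[ℂ] (rvl l).left l'))) := by
        refine Finset.sum_congr rfl fun i _ => Finset.sum_congr rfl fun j _ =>
          Finset.sum_congr rfl fun k _ => Finset.sum_congr rfl fun l _ => ?_
        rw [map_sum4]
        simp only [Finset.smul_sum]
        refine Finset.sum_congr rfl fun i' _ => Finset.sum_congr rfl fun j' _ =>
          Finset.sum_congr rfl fun k' _ => Finset.sum_congr rfl fun l' _ => ?_
        rw [bigL_tmul, smul_smul]
        congr 1
        ring
    _ = ∑ i ∈ rx.index, ∑ j ∈ ry.index, ∑ k ∈ rz.index, ∑ l ∈ rv.index,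
          f' (rx.right i * (S'' (ry.left j) * (S'' (rz.left k) * rv.right l))) •
            plaquetteRep A f
              (rx.left i ⊗ₜ[ℂ] (ry.right j ⊗ₜ[ℂ] (rz.right k ⊗ₜ[ℂ] rv.left l))) := by
        refine Finset.sum_congr rfl fun i _ => Finset.sum_congr rfl fun j _ =>
          Finset.sum_congr rfl fun k _ => Finset.sum_congr rfl fun l _ => ?_
        rw [plaq_apply f (rxl i) (ryr j) (rzr k) (rvl l)]
    _ = plaquetteRep A f (plaquetteRep A f' (x ⊗ₜ[ℂ] (y ⊗ₜ[ℂ] (z ⊗ₜ[ℂ] v)))) := by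
        rw [plaq_apply f' rx ry rz rv]
        simp only [map_sum, map_smul]

end Main

theorem plaquetteRep_one_and_mul :
    plaquetteRep A Coalgebra.counit = LinearMap.id ∧
    ∀ f f' : Module.Dual ℂ A,
      plaquetteRep A (conv f f') = plaquetteRep A f ∘ₗ plaquetteRep A f' :=
  ⟨part1, fun f f' => part2 f f'⟩

end
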